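/- Assume the set of saddle points of the Lagrangian l is nonempty, M₁ᵏ − (L/2)·Id ∈ S₊(H), M₁ᵏ ⪰ M₁^{k+1}, M₂ᵏ ∈ S₊(G), M₂ᵏ ⪰ M₂^{k+1} for all k ≥ 0, let (xᵏ, zᵏ, yᵏ)_{k≥0} be the sequence generated by the variable-metric ADMM algorithm, and let (x*, z*, y*) be a saddle point of l. Then for all k ≥ 0: (1/2)‖x^{k+1} − x*‖²_{M₁^{k+1}} + (1/2)‖z^{k+1} − Ax*‖²_{M₂^{k+1} + c·Id} + (1/(2c))‖y^{k+1} − y*‖² ≤ (1/2)‖xᵏ − x*‖²_{M₁ᵏ} + (1/2)‖zᵏ − Ax*‖²_{M₂ᵏ + c·Id} + (1/(2c))‖yᵏ − y*‖² − (c/2)‖zᵏ − Ax^{k+1}‖² − (1/2)‖xᵏ − x^{k+1}‖²_{M₁ᵏ − (L/2)Id} − (1/2)‖zᵏ − z^{k+1}‖²_{M₂ᵏ} − L‖L⁻¹(∇h(x*) − ∇h(xᵏ)) + (1/2)(xᵏ − x^{k+1})‖². -/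

import Mathlib

open scoped InnerProductSpace
open Filter

noncomputable section

section OpDefs

variable {E F : Type*} [NormedAddCommGroup E] [InnerProductSpace ℝ E]
  [NormedAddCommGroup F] [InnerProductSpace ℝ F]

/-- `U ∈ S₊(E)`: continuous linear, self-adjoint and positive semidefinite. -/
def IsSplusOp (U : E →L[ℝ] E) : Prop :=
  (∀ x y : E, ⟪U x, y⟫_ℝ = ⟪x, U y⟫_ℝ) ∧ ∀ x : E, 0 ≤ ⟪x, U x⟫_ℝ

/-- The squared seminorm `‖x‖²_U := ⟪x, U x⟫`. -/
def opSq (U : E →L[ℝ] E) (x : E) : ℝ := ⟪x, U x⟫_ℝ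

/-- Loewner order `U ⪰ V`. -/
def opLE (U V : E →L[ℝ] E) : Prop := ∀ x : E, ⟪x, V x⟫_ℝ ≤ ⟪x, U x⟫_ℝ

/-- `U ∈ P_α(E)`, i.e. `U ∈ S₊(E)` and `U ⪰ α·Id`. -/
def IsPalphaOp (α : ℝ) (U : E →L[ℝ] E) : Prop :=
  IsSplusOp U ∧ ∀ x : E, α * ‖x‖ ^ 2 ≤ ⟪x, U x⟫_ℝ

/-- Properness of an extended-real-valued function. -/
def ERealProper (f : E → EReal) : Prop := (∀ x, f x ≠ ⊥) ∧ ∃ x, f x ≠ ⊤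

/-- Convexity of an extended-real-valued function. -/
def ERealConvex (f : E → EReal) : Prop :=
  ∀ x y : E, ∀ a b : ℝ, 0 ≤ a → 0 ≤ b → a + b = 1 →
    f (a • x + b • y) ≤ (a : EReal) * f x + (b : EReal) * f y

/-- Weak convergence of a sequence in a Hilbert space, tested against inner products. -/
def WeakConv (u : ℕ → E) (p : E) : Prop :=
  ∀ w : E, Tendsto (fun k => ⟪u k, w⟫_ℝ) atTop (nhds ⟪p, w⟫_ℝ)

/-- The Lagrangian `l(x,z,y) = f(x) + g(z) + ⟪y, Ax - z⟫`. -/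
def Lagr (f : E → EReal) (g : F → EReal) (A : E →L[ℝ] F) (p : E) (q v : F) : EReal :=
  f p + g q + ((⟪v, A p - q⟫_ℝ : ℝ) : EReal)

/-- The Lagrangian with an additional smooth summand `h`:
`l(x,z,y) = f(x) + h(x) + g(z) + ⟪y, Ax - z⟫`. -/
def LagrH (f : E → EReal) (h : E → ℝ) (g : F → EReal) (A : E →L[ℝ] F)
    (p : E) (q v : F) : EReal :=
  f p + ((h p : ℝ) : EReal) + g q + ((⟪v, A p - q⟫_ℝ : ℝ) : EReal)

/-- `(xs, zs, ys)` is a saddle point of `l`. -/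
def IsSaddle (l : E → F → F → EReal) (xs : E) (zs ys : F) : Prop :=
  ∀ (p : E) (q v : F), l xs zs v ≤ l xs zs ys ∧ l xs zs ys ≤ l p q ys

/-- `xk1` is a minimizer of `u ↦ f u + (c/2)‖Au - zk + c⁻¹ yk‖² + (1/2)‖u - xk‖²_M`. -/
def IsXUpdate (f : E → EReal) (A : E →L[ℝ] F) (c : ℝ) (M : E →L[ℝ] E)
    (xk : E) (zk yk : F) (xk1 : E) : Prop :=
  ∀ u : E,
    f xk1 + (((c/2) * ‖A xk1 - zk + c⁻¹ • yk‖ ^ 2 + (1/2) * opSq M (xk1 - xk) : ℝ) : EReal) ≤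
    f u + (((c/2) * ‖A u - zk + c⁻¹ • yk‖ ^ 2 + (1/2) * opSq M (u - xk) : ℝ) : EReal)

/-- `xk1` is a minimizer of the `x`-subproblem with linearized smooth part:
`u ↦ f u + ⟪u - xk, ∇h(xk)⟫ + (c/2)‖Au - zk + c⁻¹ yk‖² + (1/2)‖u - xk‖²_M`. -/
def IsXUpdateGrad (f : E → EReal) (h' : E → E) (A : E →L[ℝ] F) (c : ℝ) (M : E →L[ℝ] E)
    (xk : E) (zk yk : F) (xk1 : E) : Prop :=
  ∀ u : E,
    f xk1 + ((⟪xk1 - xk, h' xk⟫_ℝ + (c/2) * ‖A xk1 - zk + c⁻¹ • yk‖ ^ 2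
        + (1/2) * opSq M (xk1 - xk) : ℝ) : EReal) ≤
    f u + ((⟪u - xk, h' xk⟫_ℝ + (c/2) * ‖A u - zk + c⁻¹ • yk‖ ^ 2
        + (1/2) * opSq M (u - xk) : ℝ) : EReal)

/-- `zk1` is a minimizer of `w ↦ g w + (c/2)‖Ax - w + c⁻¹ yk‖² + (1/2)‖w - zk‖²_M`. -/
def IsZUpdate (g : F → EReal) (c : ℝ) (M : F →L[ℝ] F)
    (Ax zk yk zk1 : F) : Prop :=
  ∀ w : F,
    g zk1 + (((c/2) * ‖Ax - zk1 + c⁻¹ • yk‖ ^ 2 + (1/2) * opSq M (zk1 - zk) : ℝ) : EReal) ≤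
    g w + (((c/2) * ‖Ax - w + c⁻¹ • yk‖ ^ 2 + (1/2) * opSq M (w - zk) : ℝ) : EReal)

end OpDefs

section Helpers

variable {E F : Type*} [NormedAddCommGroup E] [InnerProductSpace ℝ E]
  [NormedAddCommGroup F] [InnerProductSpace ℝ F]

lemma limit_aux {a b Q : ℝ} (hQ : 0 ≤ Q) (h : ∀ t : ℝ, 0 < t → t ≤ 1 → a ≤ b + t * Q) :
    a ≤ b := by
  by_contra hc
  push_neg at hc
  set t : ℝ := min 1 ((a - b) / (2 * (Q + 1))) with ht
  have h1 : 0 < (a - b) / (2 * (Q + 1)) := div_pos (by linarith) (by linarith)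
  have ht0 : 0 < t := lt_min one_pos h1
  have ht1 : t ≤ 1 := min_le_left _ _
  have ht2 : t ≤ (a - b) / (2 * (Q + 1)) := min_le_right _ _
  have := h t ht0 ht1
  have h3 : t * Q ≤ ((a - b) / (2 * (Q + 1))) * Q := mul_le_mul_of_nonneg_right ht2 hQ
  have h4 : ((a - b) / (2 * (Q + 1))) * Q < a - b := by
    rw [div_mul_eq_mul_div, div_lt_iff₀ (by linarith)]
    nlinarith
  linarith

lemma norm_add_smul_sq (a b : E) (t : ℝ) :
    ‖a + t • b‖ ^ 2 = ‖a‖ ^ 2 + 2 * (t * ⟪a, b⟫_ℝ) + t ^ 2 * ‖b‖ ^ 2 := by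
  rw [norm_add_sq_real, real_inner_smul_right, norm_smul]
  simp only [mul_pow, sq_abs, Real.norm_eq_abs]

lemma inner_pol (a b d : E) (hd : a - b = d) :
    ⟪a, b⟫_ℝ = (‖a‖ ^ 2 + ‖b‖ ^ 2 - ‖d‖ ^ 2) / 2 := by
  rw [← hd, norm_sub_sq_real]; ring

lemma opSq_add_smul {M : E →L[ℝ] E} (hM : ∀ x y : E, ⟪M x, y⟫_ℝ = ⟪x, M y⟫_ℝ)
    (a b : E) (t : ℝ) :
    opSq M (a + t • b) = opSq M a + 2 * (t * ⟪b, M a⟫_ℝ) + t ^ 2 * opSq M b := by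
  unfold opSq
  rw [map_add, map_smul]
  rw [inner_add_left, inner_add_right, inner_add_right]
  rw [real_inner_smul_left, real_inner_smul_right, real_inner_smul_left, real_inner_smul_right]
  have : ⟪a, M b⟫_ℝ = ⟪b, M a⟫_ℝ := by rw [← hM a b, real_inner_comm]
  rw [this]
  ring

lemma opSq_neg (M : E →L[ℝ] E) (v : E) : opSq M (-v) = opSq M v := by
  unfold opSq; rw [map_neg, inner_neg_neg]

lemma opSq_polar {M : E →L[ℝ] E} (hM : ∀ x y : E, ⟪M x, y⟫_ℝ = ⟪x, M y⟫_ℝ) (a b : E) :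
    ⟪b, M a⟫_ℝ = (opSq M (a + b) - opSq M a - opSq M b) / 2 := by
  have := opSq_add_smul hM a b 1
  simp only [one_smul, one_pow, one_mul] at this
  linarith

end Helpers

section VI

variable {E F : Type*} [NormedAddCommGroup E] [InnerProductSpace ℝ E]
  [NormedAddCommGroup F] [InnerProductSpace ℝ F]

lemma finite_of_min {f : E → EReal} (hfp : ERealProper f) {x : E} {φ : E → ℝ}
    (hmin : ∀ w : E, f x + ((φ x : ℝ) : EReal) ≤ f w + ((φ w : ℝ) : EReal)) :
    ∃ r : ℝ, f x = (r : EReal) := by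
  obtain ⟨u, hu⟩ := hfp.2
  have hub : f u ≠ ⊥ := hfp.1 u
  have hxt : f x ≠ ⊤ := by
    intro hx
    have h1 := hmin u
    rw [hx] at h1
    have h2 : (⊤ : EReal) + ((φ x : ℝ) : EReal) = ⊤ := by
      rw [EReal.top_add_of_ne_bot (EReal.coe_ne_bot _)]
    rw [h2, top_le_iff] at h1
    obtain ⟨r, hr⟩ : ∃ r : ℝ, f u = (r : EReal) := ⟨(f u).toReal, (EReal.coe_toReal hu hub).symm⟩
    rw [hr, ← EReal.coe_add] at h1
    exact EReal.coe_ne_top _ h1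
  exact ⟨(f x).toReal, (EReal.coe_toReal hxt (hfp.1 x)).symm⟩

lemma vi_of_min {f : E → EReal} (hfc : ERealConvex f) {x u : E} {fx fu : ℝ}
    (hx : f x = (fx : EReal)) (hu : f u = (fu : EReal)) {φ : E → ℝ}
    (hmin : ∀ w : E, f x + ((φ x : ℝ) : EReal) ≤ f w + ((φ w : ℝ) : EReal))
    {s Q : ℝ} (hQ : 0 ≤ Q)
    (hexp : ∀ t : ℝ, 0 < t → t ≤ 1 → φ (x + t • (u - x)) = φ x + t * s + t ^ 2 * Q) :
    fx ≤ fu + s := by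
  apply limit_aux hQ
  intro t ht0 ht1
  have hw : ((1 - t) : ℝ) • x + t • u = x + t • (u - x) := by module
  have hconv := hfc x u (1 - t) t (by linarith) (le_of_lt ht0) (by ring)
  rw [hw, hx, hu] at hconv
  have hmin' := hmin (x + t • (u - x))
  rw [hx, hexp t ht0 ht1] at hmin'
  have hchain : ((fx + φ x : ℝ) : EReal) ≤
      (((1 - t) * fx + t * fu + (φ x + t * s + t ^ 2 * Q) : ℝ) : EReal) := by
    calc ((fx + φ x : ℝ) : EReal) = (fx : EReal) + ((φ x : ℝ) : EReal) := by
          rw [EReal.coe_add]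
      _ ≤ f (x + t • (u - x)) + ((φ x + t * s + t ^ 2 * Q : ℝ) : EReal) := hmin'
      _ ≤ ((1 - t : ℝ) : EReal) * (fx : EReal) + ((t : ℝ) : EReal) * (fu : EReal)
            + ((φ x + t * s + t ^ 2 * Q : ℝ) : EReal) := by
          exact add_le_add_left hconv _
      _ = (((1 - t) * fx + t * fu + (φ x + t * s + t ^ 2 * Q) : ℝ) : EReal) := by
          rw [← EReal.coe_mul, ← EReal.coe_mul, ← EReal.coe_add, ← EReal.coe_add]
  rw [EReal.coe_le_coe_iff] at hchain
  have ht' : t * fx ≤ t * (fu + s + t * Q) := by nlinarith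
  have := (mul_le_mul_iff_right₀ ht0).mp ht'
  linarith

end VI

section Smooth

open Topology

variable {E : Type*} [NormedAddCommGroup E] [InnerProductSpace ℝ E] [CompleteSpace E]

lemma line_deriv {h : E → ℝ} {h' : E → E} (hgrad : ∀ p : E, HasGradientAt h (h' p) p)
    (a v : E) (t : ℝ) :
    HasDerivAt (fun s : ℝ => h (a + s • v)) ⟪h' (a + t • v), v⟫_ℝ t := by
  have hγ : HasDerivAt (fun s : ℝ => a + s • v) v t := by
    simpa using ((hasDerivAt_id t).smul_const v).const_add a
  have hf := (hgrad (a + t • v)).hasFDerivAt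
  have := hf.comp_hasDerivAt t hγ
  simpa [InnerProductSpace.toDual_apply_apply, Function.comp_def] using this

lemma descent_lemma {h : E → ℝ} {h' : E → E} {L : ℝ} (hL : 0 < L)
    (hgrad : ∀ p : E, HasGradientAt h (h' p) p)
    (hlip : LipschitzWith (Real.toNNReal L) h') (a v : E) :
    h (a + v) ≤ h a + ⟪h' a, v⟫_ℝ + (L / 2) * ‖v‖ ^ 2 := by
  set ψ : ℝ → ℝ := fun t => h (a + t • v) - t * ⟪h' a, v⟫_ℝ - L / 2 * t ^ 2 * ‖v‖ ^ 2 with hψ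
  have hd : ∀ t : ℝ, HasDerivAt ψ (⟪h' (a + t • v), v⟫_ℝ - ⟪h' a, v⟫_ℝ - L * t * ‖v‖ ^ 2) t := by
    intro t
    have h1 := line_deriv hgrad a v t
    have h2 : HasDerivAt (fun t : ℝ => t * ⟪h' a, v⟫_ℝ) ⟪h' a, v⟫_ℝ t := by
      simpa using (hasDerivAt_id t).mul_const ⟪h' a, v⟫_ℝ
    have h3 : HasDerivAt (fun t : ℝ => L / 2 * t ^ 2 * ‖v‖ ^ 2) (L * t * ‖v‖ ^ 2) t := by
      have := ((hasDerivAt_pow 2 t).const_mul (L / 2)).mul_const (‖v‖ ^ 2)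
      refine this.congr_deriv ?_
      simp only [Nat.cast_ofNat, Nat.add_one_sub_one, pow_one]
      ring
    exact (h1.sub h2).sub h3
  have hdiff : Differentiable ℝ ψ := fun t => (hd t).differentiableAt
  have hmono : AntitoneOn ψ (Set.Icc 0 1) := by
    apply antitoneOn_of_deriv_nonpos (convex_Icc 0 1)
    · exact hdiff.continuous.continuousOn
    · exact fun t _ => (hdiff t).differentiableWithinAt
    · intro t ht
      rw [interior_Icc] at ht
      rw [(hd t).deriv]
      have hlip' : ‖h' (a + t • v) - h' a‖ ≤ L * (t * ‖v‖) := by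
        have hdl := hlip.dist_le_mul (a + t • v) a
        rw [dist_eq_norm, dist_eq_norm] at hdl
        simp only [add_sub_cancel_left] at hdl
        calc ‖h' (a + t • v) - h' a‖ ≤ Real.toNNReal L * ‖t • v‖ := hdl
          _ = L * ‖t • v‖ := by rw [Real.coe_toNNReal _ hL.le]
          _ = L * (|t| * ‖v‖) := by rw [norm_smul, Real.norm_eq_abs]
          _ = L * (t * ‖v‖) := by rw [abs_of_pos ht.1]
      have hin : ⟪h' (a + t • v) - h' a, v⟫_ℝ ≤ ‖h' (a + t • v) - h' a‖ * ‖v‖ :=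
        real_inner_le_norm _ _
      rw [inner_sub_left] at hin
      nlinarith [norm_nonneg v, mul_le_mul_of_nonneg_right hlip' (norm_nonneg v)]
  have hfin := hmono (Set.mem_Icc.mpr ⟨le_refl 0, zero_le_one⟩)
    (Set.mem_Icc.mpr ⟨zero_le_one, le_refl 1⟩) zero_le_one
  simp only [hψ, zero_smul, add_zero, one_smul, zero_mul, mul_zero,
    one_pow, mul_one, sub_zero] at hfin
  nlinarith [hfin]

lemma grad_ineq {h : E → ℝ} {h' : E → E} (hconv : ConvexOn ℝ Set.univ h)
    (hgrad : ∀ p : E, HasGradientAt h (h' p) p) (a b : E) :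
    h a + ⟪h' a, b - a⟫_ℝ ≤ h b := by
  set v := b - a with hv
  have hder := line_deriv hgrad a v 0
  rw [zero_smul, add_zero] at hder
  have hslope : Tendsto (slope (fun s : ℝ => h (a + s • v)) 0) (𝓝[>] 0)
      (𝓝 ⟪h' a, v⟫_ℝ) := by
    have := hasDerivAt_iff_tendsto_slope.mp hder
    exact this.mono_left (nhdsWithin_mono 0 (fun t ht => ne_of_gt ht))
  have hbound : ∀ᶠ t in 𝓝[>] (0:ℝ), slope (fun s : ℝ => h (a + s • v)) 0 t ≤ h b - h a := by
    filter_upwards [Ioc_mem_nhdsGT_of_mem (Set.mem_Ico.mpr ⟨le_refl 0, zero_lt_one⟩)]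
      with t ht
    obtain ⟨ht0, ht1⟩ := ht
    have hcv := hconv.2 (Set.mem_univ a) (Set.mem_univ b)
      (show (0:ℝ) ≤ 1 - t by linarith) ht0.le (by ring)
    have heq : (1 - t) • a + t • b = a + t • v := by rw [hv]; module
    rw [heq] at hcv
    rw [slope_def_field]
    simp only [zero_smul, add_zero, sub_zero]
    rw [div_le_iff₀ ht0]
    have : h (a + t • v) - h a ≤ t * (h b - h a) := by
      have := hcv
      simp only [smul_eq_mul] at this
      nlinarith
    linarith [this]
  have := le_of_tendsto hslope hbound
  linarith [this]

lemma interp_ineq {h : E → ℝ} {h' : E → E} {L : ℝ} (hL : 0 < L)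
    (hconv : ConvexOn ℝ Set.univ h)
    (hgrad : ∀ p : E, HasGradientAt h (h' p) p)
    (hlip : LipschitzWith (Real.toNNReal L) h') (a b : E) :
    h b + ⟪h' b, a - b⟫_ℝ + (1 / (2 * L)) * ‖h' a - h' b‖ ^ 2 ≤ h a := by
  set g := h' a - h' b with hg
  have h1 : h b - ⟪h' b, b⟫_ℝ ≤ h (a + (-L⁻¹) • g) - ⟪h' b, a + (-L⁻¹) • g⟫_ℝ := by
    have := grad_ineq hconv hgrad b (a + (-L⁻¹) • g)
    rw [inner_sub_right] at this
    linarith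
  have h2 : h (a + (-L⁻¹) • g) ≤ h a + ⟪h' a, (-L⁻¹) • g⟫_ℝ + (L / 2) * ‖(-L⁻¹) • g‖ ^ 2 :=
    descent_lemma hL hgrad hlip a _
  have h3 : ⟪h' b, a + (-L⁻¹) • g⟫_ℝ = ⟪h' b, a⟫_ℝ + (-L⁻¹) * ⟪h' b, g⟫_ℝ := by
    rw [inner_add_right, real_inner_smul_right]
  have h4 : ⟪h' a, (-L⁻¹) • g⟫_ℝ = (-L⁻¹) * ⟪h' a, g⟫_ℝ := real_inner_smul_right _ _ _
  have h5 : ‖(-L⁻¹) • g‖ ^ 2 = L⁻¹ ^ 2 * ‖g‖ ^ 2 := by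
    rw [norm_smul, Real.norm_eq_abs, mul_pow, sq_abs, neg_pow]
    ring
  have h6 : ⟪h' a, g⟫_ℝ - ⟪h' b, g⟫_ℝ = ‖g‖ ^ 2 := by
    rw [← inner_sub_left, ← hg, real_inner_self_eq_norm_sq]
  have h7 : ⟪h' b, a - b⟫_ℝ = ⟪h' b, a⟫_ℝ - ⟪h' b, b⟫_ℝ := inner_sub_right _ _ _
  have hL' : L ≠ 0 := ne_of_gt hL
  rw [h3] at h1
  rw [h4, h5] at h2
  have e3 : (-L⁻¹) * ⟪h' a, g⟫_ℝ - (-L⁻¹) * ⟪h' b, g⟫_ℝ = -L⁻¹ * ‖g‖ ^ 2 := by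
    rw [← mul_sub, h6]
  have e2 : (L / 2) * (L⁻¹ ^ 2 * ‖g‖ ^ 2) = (1 / (2 * L)) * ‖g‖ ^ 2 := by
    field_simp
  have e4 : -L⁻¹ * ‖g‖ ^ 2 = -(2 * ((1 / (2 * L)) * ‖g‖ ^ 2)) := by
    field_simp
  rw [h7]
  linarith [h1, h2, e2, e3, e4]

lemma cocoercive {h : E → ℝ} {h' : E → E} {L : ℝ} (hL : 0 < L)
    (hconv : ConvexOn ℝ Set.univ h)
    (hgrad : ∀ p : E, HasGradientAt h (h' p) p)
    (hlip : LipschitzWith (Real.toNNReal L) h') (a b : E) :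
    (1 / L) * ‖h' a - h' b‖ ^ 2 ≤ ⟪a - b, h' a - h' b⟫_ℝ := by
  have h1 := interp_ineq hL hconv hgrad hlip a b
  have h2 := interp_ineq hL hconv hgrad hlip b a
  have e1 : ‖h' b - h' a‖ = ‖h' a - h' b‖ := norm_sub_rev _ _
  rw [e1] at h2
  have e2 : ⟪a - b, h' a - h' b⟫_ℝ = - (⟪h' a, b - a⟫_ℝ + ⟪h' b, a - b⟫_ℝ) := by
    rw [show ⟪h' a, b - a⟫_ℝ = ⟪b - a, h' a⟫_ℝ from real_inner_comm _ _,
      show ⟪h' b, a - b⟫_ℝ = ⟪a - b, h' b⟫_ℝ from real_inner_comm _ _,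
      inner_sub_right, show b - a = -(a - b) from (neg_sub a b).symm, inner_neg_left]
    ring
  rw [e2]
  have : (1 : ℝ) / L = 2 * (1 / (2 * L)) := by field_simp
  rw [this]
  linarith

end Smooth

section KeyId

variable {F : Type*} [NormedAddCommGroup F] [InnerProductSpace ℝ F]

lemma smul_sq_norm (t : ℝ) (v : F) : ‖t • v‖ ^ 2 = t ^ 2 * ‖v‖ ^ 2 := by
  rw [norm_smul, Real.norm_eq_abs, mul_pow, sq_abs]

lemma key_id {c : ℝ} (hc : 0 < c) (P v1 v2 vs w1 ws : F) :
    ⟪P - vs, (w1 + c • (P - v1)) - ws⟫_ℝ + ⟪vs - v2, (w1 + c • (P - v2)) - ws⟫_ℝ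
    = (1/(2*c)) * ‖(w1 + c • (P - v2)) - ws‖ ^ 2 - (1/(2*c)) * ‖w1 - ws‖ ^ 2
      + (c/2) * ‖v2 - vs‖ ^ 2 - (c/2) * ‖v1 - vs‖ ^ 2 + (c/2) * ‖P - v1‖ ^ 2 := by
  have e1 : (w1 + c • (P - v2)) - ws = (w1 - ws) + c • (P - v2) := by module
  have e1' : (w1 + c • (P - v1)) - ws = (w1 - ws) + c • (P - v1) := by module
  rw [e1, e1', norm_add_smul_sq]
  rw [inner_add_right, inner_add_right, real_inner_smul_right, real_inner_smul_right]
  have s1 : ⟪P - vs, w1 - ws⟫_ℝ = ⟪P - v2, w1 - ws⟫_ℝ + ⟪v2 - vs, w1 - ws⟫_ℝ := by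
    rw [← inner_add_left]
    congr 1
    abel
  have s2 : ⟪vs - v2, w1 - ws⟫_ℝ = -⟪v2 - vs, w1 - ws⟫_ℝ := by
    rw [show vs - v2 = -(v2 - vs) by abel, inner_neg_left]
  have s3 : ⟪w1 - ws, P - v2⟫_ℝ = ⟪P - v2, w1 - ws⟫_ℝ := real_inner_comm _ _
  have p1 : ⟪P - vs, P - v1⟫_ℝ = (‖P - vs‖ ^ 2 + ‖P - v1‖ ^ 2 - ‖v1 - vs‖ ^ 2) / 2 :=
    inner_pol _ _ _ (by abel)
  have p2 : ⟪vs - v2, P - v2⟫_ℝ = (‖vs - v2‖ ^ 2 + ‖P - v2‖ ^ 2 - ‖vs - P‖ ^ 2) / 2 :=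
    inner_pol _ _ _ (by abel)
  have n1 : ‖vs - v2‖ = ‖v2 - vs‖ := norm_sub_rev _ _
  have n2 : ‖vs - P‖ = ‖P - vs‖ := norm_sub_rev _ _
  rw [s1, s2, s3, p1, p2, n1, n2]
  have hc' : c ≠ 0 := ne_of_gt hc
  field_simp
  ring

end KeyId

section OpSqC

variable {F : Type*} [NormedAddCommGroup F] [InnerProductSpace ℝ F]

lemma opSq_add_c (N : F →L[ℝ] F) (c : ℝ) (v : F) :
    opSq (N + c • ContinuousLinearMap.id ℝ F) v = opSq N v + c * ‖v‖ ^ 2 := by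
  unfold opSq
  rw [ContinuousLinearMap.add_apply, ContinuousLinearMap.smul_apply,
    ContinuousLinearMap.id_apply, inner_add_right, real_inner_smul_right,
    real_inner_self_eq_norm_sq]

lemma opSq_sub_c (N : F →L[ℝ] F) (c : ℝ) (v : F) :
    opSq (N - c • ContinuousLinearMap.id ℝ F) v = opSq N v - c * ‖v‖ ^ 2 := by
  unfold opSq
  rw [ContinuousLinearMap.sub_apply, ContinuousLinearMap.smul_apply,
    ContinuousLinearMap.id_apply, inner_sub_right, real_inner_smul_right,
    real_inner_self_eq_norm_sq]

end OpSqC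

section SaddleFacts

variable {E F : Type*} [NormedAddCommGroup E] [InnerProductSpace ℝ E]
  [NormedAddCommGroup F] [InnerProductSpace ℝ F]

/-- Finiteness of `f xs` and `g zs` at a saddle point, plus `A xs = zs`. -/
lemma saddle_facts {f : E → EReal} {g : F → EReal} {h : E → ℝ} {A : E →L[ℝ] F}
    (hfp : ERealProper f) (hgp : ERealProper g) {xs : E} {zs ys : F}
    (hsp : IsSaddle (LagrH f h g A) xs zs ys) :
    (∃ r : ℝ, f xs = (r : EReal)) ∧ (∃ r : ℝ, g zs = (r : EReal)) ∧ A xs = zs := by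
  obtain ⟨p₀, hp₀⟩ := hfp.2
  obtain ⟨q₀, hq₀⟩ := hgp.2
  obtain ⟨r₀, hr₀⟩ : ∃ r : ℝ, f p₀ = (r : EReal) :=
    ⟨(f p₀).toReal, (EReal.coe_toReal hp₀ (hfp.1 p₀)).symm⟩
  obtain ⟨t₀, ht₀⟩ : ∃ r : ℝ, g q₀ = (r : EReal) :=
    ⟨(g q₀).toReal, (EReal.coe_toReal hq₀ (hgp.1 q₀)).symm⟩
  have hub := (hsp p₀ q₀ ys).2
  have hrhs : LagrH f h g A p₀ q₀ ys
      = ((r₀ + h p₀ + t₀ + ⟪ys, A p₀ - q₀⟫_ℝ : ℝ) : EReal) := by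
    unfold LagrH
    rw [hr₀, ht₀, ← EReal.coe_add, ← EReal.coe_add, ← EReal.coe_add]
  rw [hrhs] at hub
  have hnt : LagrH f h g A xs zs ys ≠ ⊤ := fun hT => by
    rw [hT, top_le_iff] at hub
    exact EReal.coe_ne_top _ hub
  have hfxs : ∃ r : ℝ, f xs = (r : EReal) := by
    refine ⟨(f xs).toReal, (EReal.coe_toReal (fun hT => hnt ?_) (hfp.1 xs)).symm⟩
    unfold LagrH
    rw [hT, EReal.top_add_of_ne_bot (EReal.coe_ne_bot _),
      EReal.top_add_of_ne_bot (hgp.1 zs), EReal.top_add_of_ne_bot (EReal.coe_ne_bot _)]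
  have hgzs : ∃ r : ℝ, g zs = (r : EReal) := by
    obtain ⟨rx, hrx⟩ := hfxs
    refine ⟨(g zs).toReal, (EReal.coe_toReal (fun hT => hnt ?_) (hgp.1 zs)).symm⟩
    unfold LagrH
    rw [hrx, ← EReal.coe_add, hT, EReal.add_top_of_ne_bot (EReal.coe_ne_bot _),
      EReal.top_add_of_ne_bot (EReal.coe_ne_bot _)]
  obtain ⟨rx, hrx⟩ := hfxs
  obtain ⟨rz, hrz⟩ := hgzs
  refine ⟨⟨rx, hrx⟩, ⟨rz, hrz⟩, ?_⟩
  have hv := (hsp xs zs (ys + (A xs - zs))).1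
  have hcoe : ∀ v : F, LagrH f h g A xs zs v
      = ((rx + h xs + rz + ⟪v, A xs - zs⟫_ℝ : ℝ) : EReal) := by
    intro v
    unfold LagrH
    rw [hrx, hrz, ← EReal.coe_add, ← EReal.coe_add, ← EReal.coe_add]
  rw [hcoe, hcoe, EReal.coe_le_coe_iff] at hv
  have : ⟪ys + (A xs - zs), A xs - zs⟫_ℝ ≤ ⟪ys, A xs - zs⟫_ℝ := by linarith
  rw [inner_add_left] at this
  have hn : ‖A xs - zs‖ ^ 2 ≤ 0 := by
    rw [← real_inner_self_eq_norm_sq]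
    linarith
  have := le_antisymm hn (sq_nonneg _)
  rw [pow_eq_zero_iff (by norm_num), norm_eq_zero, sub_eq_zero] at this
  exact this

end SaddleFacts

set_option maxHeartbeats 2000000 in
theorem stmt12 {H G : Type*}
    [NormedAddCommGroup H] [InnerProductSpace ℝ H] [CompleteSpace H]
    [NormedAddCommGroup G] [InnerProductSpace ℝ G] [CompleteSpace G]
    (f : H → EReal) (g : G → EReal)
    (hfp : ERealProper f) (hfc : ERealConvex f) (hfl : LowerSemicontinuous f)
    (hgp : ERealProper g) (hgc : ERealConvex g) (hgl : LowerSemicontinuous g)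
    (h : H → ℝ) (h' : H → H) (L : ℝ) (hL : 0 < L)
    (hconv : ConvexOn ℝ Set.univ h)
    (hgrad : ∀ p : H, HasGradientAt h (h' p) p)
    (hlip : LipschitzWith (Real.toNNReal L) h')
    (A : H →L[ℝ] G) (c : ℝ) (hc : 0 < c)
    (M₁ : ℕ → (H →L[ℝ] H)) (M₂ : ℕ → (G →L[ℝ] G))
    (hM₁ : ∀ k : ℕ, IsSplusOp (M₁ k)) (hM₂ : ∀ k : ℕ, IsSplusOp (M₂ k))
    (hM₁L : ∀ k : ℕ, IsSplusOp (M₁ k - (L/2) • ContinuousLinearMap.id ℝ H))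
    (hM₁mono : ∀ k : ℕ, opLE (M₁ k) (M₁ (k+1)))
    (hM₂mono : ∀ k : ℕ, opLE (M₂ k) (M₂ (k+1)))
    (x : ℕ → H) (z y : ℕ → G)
    (hx : ∀ k : ℕ, IsXUpdateGrad f h' A c (M₁ k) (x k) (z k) (y k) (x (k+1)))
    (hz : ∀ k : ℕ, IsZUpdate g c (M₂ k) (A (x (k+1))) (z k) (y k) (z (k+1)))
    (hy : ∀ k : ℕ, y (k+1) = y k + c • (A (x (k+1)) - z (k+1)))
    (xs : H) (zs ys : G)
    (hsp : IsSaddle (LagrH f h g A) xs zs ys) :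
    ∀ k : ℕ,
      (1/2) * opSq (M₁ (k+1)) (x (k+1) - xs)
        + (1/2) * opSq (M₂ (k+1) + c • ContinuousLinearMap.id ℝ G) (z (k+1) - A xs)
        + (1/(2*c)) * ‖y (k+1) - ys‖ ^ 2 ≤
      (1/2) * opSq (M₁ k) (x k - xs)
        + (1/2) * opSq (M₂ k + c • ContinuousLinearMap.id ℝ G) (z k - A xs)
        + (1/(2*c)) * ‖y k - ys‖ ^ 2
        - (c/2) * ‖z k - A (x (k+1))‖ ^ 2
        - (1/2) * opSq (M₁ k - (L/2) • ContinuousLinearMap.id ℝ H) (x k - x (k+1))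
        - (1/2) * opSq (M₂ k) (z k - z (k+1))
        - L * ‖L⁻¹ • (h' xs - h' (x k)) + (1/2 : ℝ) • (x k - x (k+1))‖ ^ 2 := by
  obtain ⟨⟨fxs, hfxs⟩, ⟨gzs, hgzs⟩, hAxs⟩ := saddle_facts hfp hgp hsp
  subst hAxs
  intro k
  -- ===== finiteness of iterates =====
  obtain ⟨fx2, hfx2⟩ := finite_of_min hfp (φ := fun u => ⟪u - x k, h' (x k)⟫_ℝ + (c/2) * ‖A u - z k + c⁻¹ • y k‖ ^ 2 + (1/2) * opSq (M₁ k) (u - x k)) (hx k)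
  obtain ⟨gz2, hgz2⟩ := finite_of_min hgp (φ := fun w => (c/2) * ‖A (x (k+1)) - w + c⁻¹ • y k‖ ^ 2 + (1/2) * opSq (M₂ k) (w - z k)) (hz k)
  -- ===== x-update variational inequality =====
  have hexp₁ : ∀ t : ℝ, 0 < t → t ≤ 1 →
      (⟪(x (k+1) + t • (xs - x (k+1))) - x k, h' (x k)⟫_ℝ
        + (c/2) * ‖A (x (k+1) + t • (xs - x (k+1))) - z k + c⁻¹ • y k‖ ^ 2
        + (1/2) * opSq (M₁ k) ((x (k+1) + t • (xs - x (k+1))) - x k))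
      = (⟪x (k+1) - x k, h' (x k)⟫_ℝ
        + (c/2) * ‖A (x (k+1)) - z k + c⁻¹ • y k‖ ^ 2
        + (1/2) * opSq (M₁ k) (x (k+1) - x k))
        + t * (⟪xs - x (k+1), h' (x k)⟫_ℝ
            + c * ⟪A (x (k+1)) - z k + c⁻¹ • y k, A (xs - x (k+1))⟫_ℝ
            + ⟪xs - x (k+1), M₁ k (x (k+1) - x k)⟫_ℝ)
        + t ^ 2 * ((c/2) * ‖A (xs - x (k+1))‖ ^ 2 + (1/2) * opSq (M₁ k) (xs - x (k+1))) := by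
    intro t _ _
    have ea : (x (k+1) + t • (xs - x (k+1))) - x k = (x (k+1) - x k) + t • (xs - x (k+1)) := by
      module
    have eb : A (x (k+1) + t • (xs - x (k+1))) - z k + c⁻¹ • y k
        = (A (x (k+1)) - z k + c⁻¹ • y k) + t • (A (xs - x (k+1))) := by
      rw [map_add, map_smul]
      module
    rw [ea, eb, inner_add_left, real_inner_smul_left, norm_add_smul_sq,
      opSq_add_smul (hM₁ k).1]
    ring
  have vi1 : fx2 ≤ fxs + (⟪xs - x (k+1), h' (x k)⟫_ℝ
      + c * ⟪A (x (k+1)) - z k + c⁻¹ • y k, A (xs - x (k+1))⟫_ℝ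
      + ⟪xs - x (k+1), M₁ k (x (k+1) - x k)⟫_ℝ) :=
    vi_of_min hfc hfx2 hfxs (φ := fun u => ⟪u - x k, h' (x k)⟫_ℝ + (c/2) * ‖A u - z k + c⁻¹ • y k‖ ^ 2 + (1/2) * opSq (M₁ k) (u - x k)) (hx k)
      (add_nonneg (mul_nonneg (by positivity) (by positivity)) (mul_nonneg (by norm_num) ((hM₁ k).2 _)))
      hexp₁
  -- ===== z-update variational inequality =====
  have hexp₂ : ∀ t : ℝ, 0 < t → t ≤ 1 →
      ((c/2) * ‖A (x (k+1)) - (z (k+1) + t • (A xs - z (k+1))) + c⁻¹ • y k‖ ^ 2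
        + (1/2) * opSq (M₂ k) ((z (k+1) + t • (A xs - z (k+1))) - z k))
      = ((c/2) * ‖A (x (k+1)) - z (k+1) + c⁻¹ • y k‖ ^ 2
        + (1/2) * opSq (M₂ k) (z (k+1) - z k))
        + t * (c * ⟪A (x (k+1)) - z (k+1) + c⁻¹ • y k, -(A xs - z (k+1))⟫_ℝ
            + ⟪A xs - z (k+1), M₂ k (z (k+1) - z k)⟫_ℝ)
        + t ^ 2 * ((c/2) * ‖-(A xs - z (k+1))‖ ^ 2 + (1/2) * opSq (M₂ k) (A xs - z (k+1))) := by
    intro t _ _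
    have ea : (z (k+1) + t • (A xs - z (k+1))) - z k
        = (z (k+1) - z k) + t • (A xs - z (k+1)) := by module
    have eb : A (x (k+1)) - (z (k+1) + t • (A xs - z (k+1))) + c⁻¹ • y k
        = (A (x (k+1)) - z (k+1) + c⁻¹ • y k) + t • (-(A xs - z (k+1))) := by module
    rw [ea, eb, norm_add_smul_sq, opSq_add_smul (hM₂ k).1, inner_neg_right]
    ring
  have vi2 : gz2 ≤ gzs + (c * ⟪A (x (k+1)) - z (k+1) + c⁻¹ • y k, -(A xs - z (k+1))⟫_ℝ
      + ⟪A xs - z (k+1), M₂ k (z (k+1) - z k)⟫_ℝ) :=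
    vi_of_min hgc hgz2 hgzs (φ := fun w => (c/2) * ‖A (x (k+1)) - w + c⁻¹ • y k‖ ^ 2 + (1/2) * opSq (M₂ k) (w - z k)) (hz k)
      (add_nonneg (mul_nonneg (by positivity) (by positivity)) (mul_nonneg (by norm_num) ((hM₂ k).2 _)))
      hexp₂
  -- ===== saddle inequality for g =====
  have hzero : ⟪ys, A xs - A xs⟫_ℝ = 0 := by rw [sub_self, inner_zero_right]
  have hS2 : gzs ≤ gz2 + ⟪ys, A xs - z (k+1)⟫_ℝ := by
    have hs := (hsp xs (z (k+1)) ys).2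
    unfold LagrH at hs
    rw [hfxs, hgzs, hgz2] at hs
    simp only [← EReal.coe_add] at hs
    rw [EReal.coe_le_coe_iff] at hs
    rw [hzero] at hs
    linarith
  -- ===== saddle inequality for f (linearized, via limit) =====
  have hS1 : fxs ≤ fx2 + ⟪h' xs, x (k+1) - xs⟫_ℝ + ⟪ys, A (x (k+1) - xs)⟫_ℝ := by
    apply limit_aux (Q := (L/2) * ‖x (k+1) - xs‖ ^ 2) (by positivity)
    intro t ht0 ht1
    have hpt : ((1 - t) : ℝ) • xs + t • x (k+1) = xs + t • (x (k+1) - xs) := by module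
    have hf1 := hfc xs (x (k+1)) (1 - t) t (by linarith) ht0.le (by ring)
    rw [hpt, hfxs, hfx2, ← EReal.coe_mul, ← EReal.coe_mul, ← EReal.coe_add] at hf1
    have hh1 : h (xs + t • (x (k+1) - xs)) ≤ h xs + t * ⟪h' xs, x (k+1) - xs⟫_ℝ
        + (L/2) * (t ^ 2 * ‖x (k+1) - xs‖ ^ 2) := by
      have hdl := descent_lemma hL hgrad hlip xs (t • (x (k+1) - xs))
      rw [real_inner_smul_right, smul_sq_norm] at hdl
      exact hdl
    have hApt : A (xs + t • (x (k+1) - xs)) - A xs = t • (A (x (k+1) - xs)) := by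
      rw [map_add, map_smul]
      abel
    have hsp2 := (hsp (xs + t • (x (k+1) - xs)) (A xs) ys).2
    unfold LagrH at hsp2
    rw [hfxs, hgzs, hApt] at hsp2
    have hchain : ((fxs + h xs + gzs + ⟪ys, A xs - A xs⟫_ℝ : ℝ) : EReal)
        ≤ (((1-t) * fxs + t * fx2 + h (xs + t • (x (k+1) - xs)) + gzs
            + ⟪ys, t • (A (x (k+1) - xs))⟫_ℝ : ℝ) : EReal) := by
      calc ((fxs + h xs + gzs + ⟪ys, A xs - A xs⟫_ℝ : ℝ) : EReal)
          = ((fxs : ℝ) : EReal) + ((h xs : ℝ) : EReal) + ((gzs : ℝ) : EReal)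
            + ((⟪ys, A xs - A xs⟫_ℝ : ℝ) : EReal) := by
            rw [← EReal.coe_add, ← EReal.coe_add, ← EReal.coe_add]
        _ ≤ f (xs + t • (x (k+1) - xs)) + ((h (xs + t • (x (k+1) - xs)) : ℝ) : EReal)
            + ((gzs : ℝ) : EReal) + ((⟪ys, t • (A (x (k+1) - xs))⟫_ℝ : ℝ) : EReal) := hsp2
        _ ≤ (((1-t) * fxs + t * fx2 : ℝ) : EReal) + ((h (xs + t • (x (k+1) - xs)) : ℝ) : EReal)
            + ((gzs : ℝ) : EReal) + ((⟪ys, t • (A (x (k+1) - xs))⟫_ℝ : ℝ) : EReal) := by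
            exact add_le_add_left (add_le_add_left (add_le_add_left hf1 _) _) _
        _ = (((1-t) * fxs + t * fx2 + h (xs + t • (x (k+1) - xs)) + gzs
            + ⟪ys, t • (A (x (k+1) - xs))⟫_ℝ : ℝ) : EReal) := by
            rw [← EReal.coe_add, ← EReal.coe_add, ← EReal.coe_add]
    rw [EReal.coe_le_coe_iff] at hchain
    rw [hzero, real_inner_smul_right] at hchain
    have hmul : t * fxs ≤ t * (fx2 + ⟪h' xs, x (k+1) - xs⟫_ℝ + ⟪ys, A (x (k+1) - xs)⟫_ℝ
        + t * ((L/2) * ‖x (k+1) - xs‖ ^ 2)) := by nlinarith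
    have := (mul_le_mul_iff_right₀ ht0).mp hmul
    linarith
  -- ===== combine: x-side master inequality =====
  have Eb : c * ⟪A (x (k+1)) - z k + c⁻¹ • y k, A (xs - x (k+1))⟫_ℝ
      + ⟪ys, A (x (k+1) - xs)⟫_ℝ
      = -⟪A (x (k+1)) - A xs, (y k + c • (A (x (k+1)) - z k)) - ys⟫_ℝ := by
    have m0 : c • (A (x (k+1)) - z k + c⁻¹ • y k) = y k + c • (A (x (k+1)) - z k) := by
      rw [smul_add, smul_inv_smul₀ (ne_of_gt hc)]
      abel
    have m1 : A (xs - x (k+1)) = -(A (x (k+1)) - A xs) := by rw [map_sub]; abel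
    have m2 : A (x (k+1) - xs) = A (x (k+1)) - A xs := by rw [map_sub]
    rw [← real_inner_smul_left, m0, m1, m2, inner_neg_right,
      show ⟪A (x (k+1)) - A xs, (y k + c • (A (x (k+1)) - z k)) - ys⟫_ℝ
        = ⟪A (x (k+1)) - A xs, y k + c • (A (x (k+1)) - z k)⟫_ℝ
          - ⟪A (x (k+1)) - A xs, ys⟫_ℝ from inner_sub_right _ _ _,
      show ⟪A (x (k+1)) - A xs, y k + c • (A (x (k+1)) - z k)⟫_ℝ
        = ⟪y k + c • (A (x (k+1)) - z k), A (x (k+1)) - A xs⟫_ℝ from real_inner_comm _ _,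
      show ⟪A (x (k+1)) - A xs, ys⟫_ℝ = ⟪ys, A (x (k+1)) - A xs⟫_ℝ from real_inner_comm _ _]
    ring
  have Ec : ⟪xs - x (k+1), h' (x k)⟫_ℝ + ⟪h' xs, x (k+1) - xs⟫_ℝ
      = -⟪xs - x (k+1), h' xs - h' (x k)⟫_ℝ := by
    rw [show ⟪h' xs, x (k+1) - xs⟫_ℝ = ⟪x (k+1) - xs, h' xs⟫_ℝ from real_inner_comm _ _,
      show x (k+1) - xs = -(xs - x (k+1)) from by abel, inner_neg_left,
      show ⟪xs - x (k+1), h' xs - h' (x k)⟫_ℝ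
        = ⟪xs - x (k+1), h' xs⟫_ℝ - ⟪xs - x (k+1), h' (x k)⟫_ℝ from inner_sub_right _ _ _]
    ring
  have MA : ⟪A (x (k+1)) - A xs, (y k + c • (A (x (k+1)) - z k)) - ys⟫_ℝ
      ≤ -⟪xs - x (k+1), h' xs - h' (x k)⟫_ℝ
        + ⟪xs - x (k+1), M₁ k (x (k+1) - x k)⟫_ℝ := by
    linarith [vi1, hS1, Eb, Ec]
  -- ===== combine: z-side master inequality =====
  have Ee : c * ⟪A (x (k+1)) - z (k+1) + c⁻¹ • y k, -(A xs - z (k+1))⟫_ℝ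
      + ⟪ys, A xs - z (k+1)⟫_ℝ
      = -⟪A xs - z (k+1), (y k + c • (A (x (k+1)) - z (k+1))) - ys⟫_ℝ := by
    have m0 : c • (A (x (k+1)) - z (k+1) + c⁻¹ • y k)
        = y k + c • (A (x (k+1)) - z (k+1)) := by
      rw [smul_add, smul_inv_smul₀ (ne_of_gt hc)]
      abel
    rw [← real_inner_smul_left, m0, inner_neg_right,
      show ⟪A xs - z (k+1), (y k + c • (A (x (k+1)) - z (k+1))) - ys⟫_ℝ
        = ⟪A xs - z (k+1), y k + c • (A (x (k+1)) - z (k+1))⟫_ℝ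
          - ⟪A xs - z (k+1), ys⟫_ℝ from inner_sub_right _ _ _,
      show ⟪A xs - z (k+1), y k + c • (A (x (k+1)) - z (k+1))⟫_ℝ
        = ⟪y k + c • (A (x (k+1)) - z (k+1)), A xs - z (k+1)⟫_ℝ from real_inner_comm _ _,
      show ⟪A xs - z (k+1), ys⟫_ℝ = ⟪ys, A xs - z (k+1)⟫_ℝ from real_inner_comm _ _]
    ring
  have MB : ⟪A xs - z (k+1), (y k + c • (A (x (k+1)) - z (k+1))) - ys⟫_ℝ
      ≤ ⟪A xs - z (k+1), M₂ k (z (k+1) - z k)⟫_ℝ := by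
    linarith [vi2, hS2, Ee]
  -- ===== key identity =====
  have KI := key_id hc (A (x (k+1))) (z k) (z (k+1)) (A xs) (y k) ys
  -- ===== polarization identities =====
  have Pol1 : ⟪xs - x (k+1), M₁ k (x (k+1) - x k)⟫_ℝ
      = (opSq (M₁ k) (xs - x k) - opSq (M₁ k) (x (k+1) - x k)
        - opSq (M₁ k) (xs - x (k+1))) / 2 := by
    have := opSq_polar (hM₁ k).1 (x (k+1) - x k) (xs - x (k+1))
    rw [show (x (k+1) - x k) + (xs - x (k+1)) = xs - x k from by abel] at this
    exact this
  have Pol2 : ⟪A xs - z (k+1), M₂ k (z (k+1) - z k)⟫_ℝ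
      = (opSq (M₂ k) (A xs - z k) - opSq (M₂ k) (z (k+1) - z k)
        - opSq (M₂ k) (A xs - z (k+1))) / 2 := by
    have := opSq_polar (hM₂ k).1 (z (k+1) - z k) (A xs - z (k+1))
    rw [show (z (k+1) - z k) + (A xs - z (k+1)) = A xs - z k from by abel] at this
    exact this
  -- ===== smooth term estimates =====
  have cc : (1/L) * ‖h' xs - h' (x k)‖ ^ 2 ≤ ⟪xs - x k, h' xs - h' (x k)⟫_ℝ :=
    cocoercive hL hconv hgrad hlip xs (x k)
  have Ed : ⟪xs - x (k+1), h' xs - h' (x k)⟫_ℝ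
      = ⟪xs - x k, h' xs - h' (x k)⟫_ℝ + ⟪x k - x (k+1), h' xs - h' (x k)⟫_ℝ := by
    rw [← inner_add_left]
    congr 1
    abel
  have A7 : L * ‖L⁻¹ • (h' xs - h' (x k)) + (1/2 : ℝ) • (x k - x (k+1))‖ ^ 2
      = (1/L) * ‖h' xs - h' (x k)‖ ^ 2 + ⟪x k - x (k+1), h' xs - h' (x k)⟫_ℝ
        + (L/4) * ‖x k - x (k+1)‖ ^ 2 := by
    rw [norm_add_smul_sq, real_inner_smul_left, smul_sq_norm,
      show ⟪h' xs - h' (x k), x k - x (k+1)⟫_ℝ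
        = ⟪x k - x (k+1), h' xs - h' (x k)⟫_ℝ from real_inner_comm _ _]
    field_simp
    ring
  -- ===== orientation equalities =====
  have O1 : opSq (M₁ k) (xs - x k) = opSq (M₁ k) (x k - xs) := by
    rw [show xs - x k = -(x k - xs) from by abel, opSq_neg]
  have O2 : opSq (M₁ k) (x (k+1) - x k) = opSq (M₁ k) (x k - x (k+1)) := by
    rw [show x (k+1) - x k = -(x k - x (k+1)) from by abel, opSq_neg]
  have O3 : opSq (M₁ k) (xs - x (k+1)) = opSq (M₁ k) (x (k+1) - xs) := by
    rw [show xs - x (k+1) = -(x (k+1) - xs) from by abel, opSq_neg]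
  have O4 : opSq (M₂ k) (A xs - z k) = opSq (M₂ k) (z k - A xs) := by
    rw [show A xs - z k = -(z k - A xs) from by abel, opSq_neg]
  have O5 : opSq (M₂ k) (z (k+1) - z k) = opSq (M₂ k) (z k - z (k+1)) := by
    rw [show z (k+1) - z k = -(z k - z (k+1)) from by abel, opSq_neg]
  have O6 : opSq (M₂ k) (A xs - z (k+1)) = opSq (M₂ k) (z (k+1) - A xs) := by
    rw [show A xs - z (k+1) = -(z (k+1) - A xs) from by abel, opSq_neg]
  have N1 : ‖z k - A (x (k+1))‖ ^ 2 = ‖A (x (k+1)) - z k‖ ^ 2 := by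
    rw [norm_sub_rev]
  -- ===== monotonicity of the metrics =====
  have Mo1 : opSq (M₁ (k+1)) (x (k+1) - xs) ≤ opSq (M₁ k) (x (k+1) - xs) :=
    hM₁mono k _
  have Mo2 : opSq (M₂ (k+1)) (z (k+1) - A xs) ≤ opSq (M₂ k) (z (k+1) - A xs) :=
    hM₂mono k _
  -- ===== final assembly =====
  rw [O1, O2, O3] at Pol1
  rw [O4, O5, O6] at Pol2
  rw [Pol1, Ed] at MA
  rw [Pol2] at MB
  rw [hy k, opSq_add_c, opSq_add_c, opSq_sub_c, N1]
  linarith [MA, MB, KI, cc, A7, Mo1, Mo2]
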